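/- Let T be the L×L tridiagonal Toeplitz matrix with diagonal entries −s, superdiagonal entries λ, and subdiagonal entries μ, where λ, μ ∈ ℂ \ {0} and the polynomial p(r) = λ r² − s r + μ has distinct roots r₁, r₂ with r₁^{L+1} ≠ r₂^{L+1}. Then T is invertible and for i ≤ j the (i,j) entry of T⁻¹ equals −(r₁^i − r₂^i)(r₁^{L+1−j} − r₂^{L+1−j}) / (λ (r₁ − r₂)(r₁^{L+1} − r₂^{L+1})), while for j ≤ i it equals (r₁^{−j} − r₂^{−j})(r₁^{L+1} r₂^i − r₂^{L+1} r₁^i) / (λ (r₁ − r₂)(r₁^{L+1} − r₂^{L+1})). -/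

import Mathlib

noncomputable def bfun (L : ℕ) (r₁ r₂ D : ℂ) (n m : ℕ) : ℂ :=
  if m ≤ n + 1 then
    -((r₁ ^ m - r₂ ^ m) * (r₁ ^ (L - n) - r₂ ^ (L - n))) / D
  else
    -((r₁ ^ (n + 1) - r₂ ^ (n + 1)) * (r₁ ^ (L + 1 - m) - r₂ ^ (L + 1 - m)) *
        (r₁ * r₂) ^ (m - n - 1)) / D

lemma bfun_low (L : ℕ) (r₁ r₂ D : ℂ) (n m : ℕ) (h : n + 1 ≤ m) :
    bfun L r₁ r₂ D n m =
      -((r₁ ^ (n + 1) - r₂ ^ (n + 1)) * (r₁ ^ (L + 1 - m) - r₂ ^ (L + 1 - m)) *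
        (r₁ * r₂) ^ (m - n - 1)) / D := by
  unfold bfun
  split_ifs with h'
  · have hm : m = n + 1 := by omega
    subst hm
    rw [show n + 1 - n - 1 = 0 from by omega, show L + 1 - (n + 1) = L - n from by omega]
    ring
  · rfl

lemma blow (L : ℕ) (r₁ r₂ D : ℂ) (h1 : r₁ ≠ 0) (h2 : r₂ ≠ 0) (n m : ℕ)
    (hn : n + 1 ≤ m) (hm : m ≤ L) :
    bfun L r₁ r₂ D n m =
      ((r₁⁻¹ ^ (n + 1) - r₂⁻¹ ^ (n + 1)) * (r₁ ^ (L + 1) * r₂ ^ m - r₂ ^ (L + 1) * r₁ ^ m)) / D := by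
  rw [bfun_low L r₁ r₂ D n m hn]
  obtain ⟨p, hp⟩ : ∃ p, m = n + p + 1 := ⟨m - n - 1, by omega⟩
  obtain ⟨q, hq⟩ : ∃ q, L = m + q := ⟨L - m, by omega⟩
  subst hp hq
  rw [show n + p + 1 + q + 1 - (n + p + 1) = q + 1 from by omega,
    show n + p + 1 - n - 1 = p from by omega]
  congr 1
  rw [inv_pow, inv_pow]
  field_simp
  ring

lemma brec (L n m : ℕ) (lam s mu r₁ r₂ D : ℂ)
    (hs : s = lam * (r₁ + r₂)) (hmu : mu = lam * (r₁ * r₂))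
    (hD : D = lam * (r₁ - r₂) * (r₁ ^ (L + 1) - r₂ ^ (L + 1))) (hD0 : D ≠ 0)
    (hm : m < L) (hn : n < L) :
    mu * bfun L r₁ r₂ D n m + -s * bfun L r₁ r₂ D n (m + 1)
      + lam * bfun L r₁ r₂ D n (m + 2) = if m = n then 1 else 0 := by
  rcases lt_trichotomy m n with h | h | h
  · rw [if_neg (by omega)]
    rw [show bfun L r₁ r₂ D n m = _ from if_pos (by omega : m ≤ n + 1),
      show bfun L r₁ r₂ D n (m+1) = _ from if_pos (by omega : m + 1 ≤ n + 1),
      show bfun L r₁ r₂ D n (m+2) = _ from if_pos (by omega : m + 2 ≤ n + 1)]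
    subst hs hmu
    field_simp
    ring
  · subst h
    rw [if_pos rfl]
    obtain ⟨t, ht⟩ : ∃ t, L = m + t + 1 := ⟨L - m - 1, by omega⟩
    subst ht
    rw [show bfun (m+t+1) r₁ r₂ D m m = _ from if_pos (by omega : m ≤ m + 1),
      show bfun (m+t+1) r₁ r₂ D m (m+1) = _ from if_pos (by omega : m + 1 ≤ m + 1),
      show bfun (m+t+1) r₁ r₂ D m (m+2) = _ from if_neg (by omega : ¬ m + 2 ≤ m + 1)]
    rw [show m + t + 1 - m = t + 1 from by omega,
      show m + t + 1 + 1 - (m + 2) = t from by omega,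
      show m + 2 - m - 1 = 1 from by omega]
    subst hs hmu
    field_simp
    rw [hD]
    ring
  · rw [if_neg (by omega)]
    rw [bfun_low L r₁ r₂ D n m (by omega), bfun_low L r₁ r₂ D n (m+1) (by omega),
      bfun_low L r₁ r₂ D n (m+2) (by omega)]
    obtain ⟨p, hp⟩ : ∃ p, m = n + p + 1 := ⟨m - n - 1, by omega⟩
    subst hp
    obtain ⟨q, hq⟩ : ∃ q, L = n + p + q + 2 := ⟨L - (n + p + 1) - 1, by omega⟩
    subst hq
    rw [show n + p + q + 2 + 1 - (n + p + 1) = q + 2 from by omega,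
      show n + p + q + 2 + 1 - (n + p + 1 + 1) = q + 1 from by omega,
      show n + p + q + 2 + 1 - (n + p + 1 + 2) = q from by omega,
      show n + p + 1 - n - 1 = p from by omega,
      show n + p + 1 + 1 - n - 1 = p + 1 from by omega,
      show n + p + 1 + 2 - n - 1 = p + 2 from by omega]
    subst hs hmu
    field_simp
    ring


lemma tri_sum {L : ℕ} (a c d : ℂ) (g : Fin L → ℂ) (i : Fin L) :
    ∑ j : Fin L, (if i = j then a else if (j : ℕ) = (i : ℕ) + 1 then c
      else if (i : ℕ) = (j : ℕ) + 1 then d else 0) * g j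
    = a * g i
      + (if h : (i : ℕ) + 1 < L then c * g ⟨(i : ℕ) + 1, h⟩ else 0)
      + (if h : 0 < (i : ℕ) then
          d * g ⟨(i : ℕ) - 1, lt_of_le_of_lt (Nat.sub_le _ _) i.isLt⟩ else 0) := by
  have hsplit : ∀ j : Fin L, (if i = j then a else if (j : ℕ) = (i : ℕ) + 1 then c
      else if (i : ℕ) = (j : ℕ) + 1 then d else 0) * g j
      = (if i = j then a * g j else 0) + (if (j : ℕ) = (i : ℕ) + 1 then c * g j else 0)
        + (if (i : ℕ) = (j : ℕ) + 1 then d * g j else 0) := by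
    intro j
    by_cases h1 : i = j
    · subst h1
      simp
    · have h1' : (i : ℕ) ≠ (j : ℕ) := fun h => h1 (Fin.ext h)
      by_cases h2 : (j : ℕ) = (i : ℕ) + 1
      · have h3 : ¬ (i : ℕ) = (j : ℕ) + 1 := by omega
        simp [h1, h2, h3, show ¬ (i:ℕ) = (i:ℕ) + 1 + 1 from by omega]
      · by_cases h3 : (i : ℕ) = (j : ℕ) + 1 <;>
          simp [h1, h2, h3, show ∀ a : ℕ, ¬ a = a + 1 + 1 from by omega]
  rw [Finset.sum_congr rfl fun j _ => hsplit j, Finset.sum_add_distrib,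
    Finset.sum_add_distrib]
  congr 1
  · congr 1
    · simp
    · by_cases h : (i : ℕ) + 1 < L
      · rw [dif_pos h, Finset.sum_eq_single (⟨(i : ℕ) + 1, h⟩ : Fin L)]
        · simp
        · intro b _ hb
          rw [if_neg fun hb' => hb (Fin.ext hb')]
        · simp
      · rw [dif_neg h, Finset.sum_eq_zero]
        intro j _
        rw [if_neg fun hj => h (lt_of_eq_of_lt hj.symm j.isLt)]
  · by_cases h : 0 < (i : ℕ)
    · rw [dif_pos h, Finset.sum_eq_single
        (⟨(i : ℕ) - 1, lt_of_le_of_lt (Nat.sub_le _ _) i.isLt⟩ : Fin L)]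
      · rw [if_pos (show (i:ℕ) = (i:ℕ) - 1 + 1 from by omega)]
      · intro b _ hb
        rw [if_neg fun hb' => hb (Fin.ext (show (b:ℕ) = (i:ℕ) - 1 from by omega))]
      · simp
    · rw [dif_neg h, Finset.sum_eq_zero]
      intro j _
      rw [if_neg (fun hj => by omega)]

/-- Dow 2003: closed-form inverse of a tridiagonal Toeplitz matrix.
Entries are indexed 0,…,L−1 here, corresponding to 1,…,L in the paper. -/
theorem stmt3 (L : ℕ) (lam mu s r₁ r₂ : ℂ) (hlam : lam ≠ 0) (hmu : mu ≠ 0)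
    (h₁ : lam * r₁ ^ 2 - s * r₁ + mu = 0) (h₂ : lam * r₂ ^ 2 - s * r₂ + mu = 0)
    (hne : r₁ ≠ r₂) (hpow : r₁ ^ (L + 1) ≠ r₂ ^ (L + 1))
    (T : Matrix (Fin L) (Fin L) ℂ)
    (hT : ∀ i j : Fin L, T i j =
      if i = j then -s
      else if (j : ℕ) = (i : ℕ) + 1 then lam
      else if (i : ℕ) = (j : ℕ) + 1 then mu else 0) :
    IsUnit T ∧ ∀ i j : Fin L,
      (((i : ℕ) ≤ (j : ℕ)) → T⁻¹ i j =
        -((r₁ ^ ((i : ℕ) + 1) - r₂ ^ ((i : ℕ) + 1)) *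
            (r₁ ^ (L - (j : ℕ)) - r₂ ^ (L - (j : ℕ)))) /
          (lam * (r₁ - r₂) * (r₁ ^ (L + 1) - r₂ ^ (L + 1)))) ∧
      (((j : ℕ) ≤ (i : ℕ)) → T⁻¹ i j =
        ((r₁⁻¹ ^ ((j : ℕ) + 1) - r₂⁻¹ ^ ((j : ℕ) + 1)) *
            (r₁ ^ (L + 1) * r₂ ^ ((i : ℕ) + 1) - r₂ ^ (L + 1) * r₁ ^ ((i : ℕ) + 1))) /
          (lam * (r₁ - r₂) * (r₁ ^ (L + 1) - r₂ ^ (L + 1)))) := by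
  have key : (r₁ - r₂) * (lam * (r₁ + r₂) - s) = 0 := by linear_combination h₁ - h₂
  have hs : s = lam * (r₁ + r₂) := by
    rcases mul_eq_zero.mp key with h | h
    · exact absurd (sub_eq_zero.mp h) hne
    · exact (sub_eq_zero.mp h).symm
  have hmu2 : mu = lam * (r₁ * r₂) := by linear_combination h₁ + r₁ * hs
  have hr₁ : r₁ ≠ 0 := by
    intro h; apply hmu; rw [hmu2, h]; ring
  have hr₂ : r₂ ≠ 0 := by
    intro h; apply hmu; rw [hmu2, h]; ring
  set D := lam * (r₁ - r₂) * (r₁ ^ (L + 1) - r₂ ^ (L + 1)) with hD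
  have hD0 : D ≠ 0 :=
    mul_ne_zero (mul_ne_zero hlam (sub_ne_zero.mpr hne)) (sub_ne_zero.mpr hpow)
  set B : Matrix (Fin L) (Fin L) ℂ :=
    Matrix.of fun i j : Fin L => bfun L r₁ r₂ D (j : ℕ) ((i : ℕ) + 1) with hB
  have hTB : T * B = 1 := by
    ext i k
    rw [Matrix.mul_apply, Matrix.one_apply]
    simp only [hT]
    rw [tri_sum (-s) lam mu (fun j => B j k) i]
    have e0 : B i k = bfun L r₁ r₂ D (k : ℕ) ((i : ℕ) + 1) := rfl
    have e1 : (if h : (i : ℕ) + 1 < L then lam * B ⟨(i : ℕ) + 1, h⟩ k else 0)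
        = lam * bfun L r₁ r₂ D (k : ℕ) ((i : ℕ) + 2) := by
      by_cases h : (i : ℕ) + 1 < L
      · rw [dif_pos h]; rfl
      · rw [dif_neg h]
        have hiL : (i : ℕ) + 1 = L := by omega
        have : bfun L r₁ r₂ D (k : ℕ) ((i : ℕ) + 2) = 0 := by
          unfold bfun
          rw [if_neg (by omega), show L + 1 - ((i : ℕ) + 2) = 0 from by omega]
          simp
        rw [this, mul_zero]
    have e2 : (if h : 0 < (i : ℕ) then
          mu * B ⟨(i : ℕ) - 1, lt_of_le_of_lt (Nat.sub_le _ _) i.isLt⟩ k else 0)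
        = mu * bfun L r₁ r₂ D (k : ℕ) (i : ℕ) := by
      by_cases h : 0 < (i : ℕ)
      · rw [dif_pos h]
        have : ((⟨(i : ℕ) - 1, lt_of_le_of_lt (Nat.sub_le _ _) i.isLt⟩ : Fin L) : ℕ) + 1
            = (i : ℕ) := show (i : ℕ) - 1 + 1 = (i : ℕ) from by omega
        simp only [hB, Matrix.of_apply, this]
      · rw [dif_neg h]
        have hi0 : (i : ℕ) = 0 := by omega
        have : bfun L r₁ r₂ D (k : ℕ) ((i : ℕ)) = 0 := by
          rw [hi0]; unfold bfun
          rw [if_pos (by omega)]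
          simp
        rw [this, mul_zero]
    rw [e0, e1, e2]
    have hrec := brec L (k : ℕ) (i : ℕ) lam s mu r₁ r₂ D hs hmu2 hD hD0 i.isLt k.isLt
    rw [show (if i = k then (1 : ℂ) else 0) = (if (i : ℕ) = (k : ℕ) then 1 else 0) from by
      simp [Fin.ext_iff]]
    rw [← hrec]; ring
  refine ⟨(Matrix.isUnit_iff_isUnit_det T).mpr (Matrix.isUnit_det_of_right_inverse hTB), ?_⟩
  have hinv : T⁻¹ = B := Matrix.inv_eq_right_inv hTB
  intro i j
  constructor
  · intro hij
    rw [hinv]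
    show bfun L r₁ r₂ D (j : ℕ) ((i : ℕ) + 1) = _
    unfold bfun
    rw [if_pos (by omega)]
  · intro hji
    rw [hinv]
    show bfun L r₁ r₂ D (j : ℕ) ((i : ℕ) + 1) = _
    exact blow L r₁ r₂ D hr₁ hr₂ (j : ℕ) ((i : ℕ) + 1) (by omega) (by omega)
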